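/- Let z : ℤ² → ℂ be a polygon recutting lattice map: for all (i,j), z_{i+1,j+1} is the reflection of z_{i,j} about the perpendicular bisector of the segment [z_{i+1,j}, z_{i,j+1}] (all four points pairwise distinct). Then |z_{i,j} - z_{i+1,j}| is independent of j, |z_{i,j} - z_{i,j+1}| is independent of i, and cr(z_{i,j}, z_{i+1,j}, z_{i+1,j+1}, z_{i,j+1}) = ℓ_i² / m_j² where ℓ_i = |z_{i,0} - z_{i+1,0}| (evaluated at j with the invariance) and m_j = |z_{0,j} - z_{0,j+1}|. In particular z is an integrable cross-ratio map with real positive edge-labels given by squared edge lengths. -/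

import Mathlib

/-- The cross-ratio of four complex numbers. -/
noncomputable def cr (a b c d : ℂ) : ℂ := ((a - b) * (c - d)) / ((b - c) * (d - a))

/-- Reflection of `w` across the perpendicular bisector of the segment `[u, v]`. -/
noncomputable def perpBisectorReflect (u v w : ℂ) : ℂ :=
  (u + v) / 2 - ((v - u) / (starRingEnd ℂ) (v - u)) * (starRingEnd ℂ) (w - (u + v) / 2)

lemma conj_sub_ne (u v : ℂ) (h : u ≠ v) :
    (starRingEnd ℂ) v - (starRingEnd ℂ) u ≠ 0 := by
  rw [← map_sub, ← map_zero (starRingEnd ℂ)]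
  exact fun hc => (sub_ne_zero.mpr (Ne.symm h)) ((starRingEnd ℂ).injective hc)

lemma refl_sub_v (u v w : ℂ) (h : u ≠ v) :
    perpBisectorReflect u v w - v
      = ((v - u) / (starRingEnd ℂ) (v - u)) * (starRingEnd ℂ) (u - w) := by
  have h0 := conj_sub_ne u v h
  unfold perpBisectorReflect
  simp only [map_sub, map_add, map_div₀, map_ofNat]
  field_simp
  ring

lemma refl_sub_u (u v w : ℂ) (h : u ≠ v) :
    perpBisectorReflect u v w - u
      = ((v - u) / (starRingEnd ℂ) (v - u)) * (starRingEnd ℂ) (v - w) := by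
  have h0 := conj_sub_ne u v h
  unfold perpBisectorReflect
  simp only [map_sub, map_add, map_div₀, map_ofNat]
  field_simp
  ring

lemma abs_k_mul (u v x : ℂ) (h : u ≠ v) :
    ‖((v - u) / (starRingEnd ℂ) (v - u)) * (starRingEnd ℂ) x‖ = ‖x‖ := by
  have h0 : v - u ≠ 0 := sub_ne_zero.mpr (Ne.symm h)
  rw [norm_mul, norm_div, Complex.norm_conj, Complex.norm_conj,
    div_self (norm_ne_zero_iff.mpr h0), one_mul]

lemma cabs_sub_comm (x y : ℂ) : ‖x - y‖ = ‖y - x‖ := by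
  rw [← neg_sub y x, norm_neg]

lemma const_of_step {α : Type*} (g : ℤ → α) (h : ∀ j, g (j + 1) = g j) :
    ∀ j j', g j = g j' := by
  have h0 : ∀ j, g j = g 0 := by
    intro j
    induction j using Int.induction_on with
    | zero => rfl
    | succ i ih => rw [h]; exact ih
    | pred i ih => rw [← h (-i - 1)]; simpa using ih
  intro j j'; rw [h0 j, h0 j']

lemma cr_formula (a b c d : ℂ) (hbd : b ≠ d) (hbc : b ≠ c) (had : d ≠ a)
    (hc : c = perpBisectorReflect b d a) :
    cr a b c d = ((‖a - b‖) ^ 2 / (‖d - a‖) ^ 2 : ℝ) := by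
  have hcd : c - d = ((d - b) / (starRingEnd ℂ) (d - b)) * (starRingEnd ℂ) (b - a) := by
    rw [hc]; exact refl_sub_v b d a hbd
  have hcb : c - b = ((d - b) / (starRingEnd ℂ) (d - b)) * (starRingEnd ℂ) (d - a) := by
    rw [hc]; exact refl_sub_u b d a hbd
  set k := (d - b) / (starRingEnd ℂ) (d - b) with hk
  have hdbne : d - b ≠ 0 := sub_ne_zero.mpr (Ne.symm hbd)
  have hconj : (starRingEnd ℂ) (d - b) ≠ 0 := by
    rw [ne_eq, starRingEnd_apply, star_eq_zero]; exact hdbne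
  have hkne : k ≠ 0 := div_ne_zero hdbne hconj
  have hda : d - a ≠ 0 := sub_ne_zero.mpr had
  have key : cr a b c d = (Complex.normSq (a - b) : ℂ) / (Complex.normSq (d - a) : ℂ) := by
    unfold cr
    rw [hcd, show b - c = -(k * (starRingEnd ℂ) (d - a)) by rw [← hcb]; ring]
    have h1 : (-(k * (starRingEnd ℂ) (d - a))) * (d - a) ≠ 0 := by
      apply mul_ne_zero _ hda
      simp only [neg_ne_zero]
      refine mul_ne_zero hkne ?_
      rw [ne_eq, starRingEnd_apply, star_eq_zero]; exact hda
    have h2 : (Complex.normSq (d - a) : ℂ) ≠ 0 := by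
      simpa [Complex.ofReal_eq_zero, Complex.normSq_eq_zero] using hda
    rw [div_eq_div_iff h1 h2, ← Complex.mul_conj, ← Complex.mul_conj]
    simp only [map_sub]
    ring
  rw [key, show ((‖a - b‖) ^ 2 / (‖d - a‖) ^ 2 : ℝ)
      = (Complex.normSq (a - b) / Complex.normSq (d - a) : ℝ) by
        rw [Complex.sq_norm, Complex.sq_norm]]
  push_cast
  ring

/-- In a polygon recutting lattice map, column edge lengths are independent of
the row, row edge lengths are independent of the column, and the cross-ratio of
each unit square equals the ratio of squared edge lengths `ℓ_i²/m_j²`; in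
particular `z` is an integrable cross-ratio map with real positive edge-labels
given by squared edge lengths. -/
theorem recutting_is_integrable_cross_ratio_map (z : ℤ × ℤ → ℂ)
    (hdist : ∀ i j : ℤ,
      List.Pairwise (· ≠ ·) [z (i, j), z (i + 1, j), z (i + 1, j + 1), z (i, j + 1)])
    (hrefl : ∀ i j : ℤ,
      z (i + 1, j + 1) = perpBisectorReflect (z (i + 1, j)) (z (i, j + 1)) (z (i, j))) :
    (∀ i j j' : ℤ,
      ‖z (i, j) - z (i + 1, j)‖ = ‖z (i, j') - z (i + 1, j')‖) ∧
    (∀ i i' j : ℤ,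
      ‖z (i, j) - z (i, j + 1)‖ = ‖z (i', j) - z (i', j + 1)‖) ∧
    (∀ i j : ℤ,
      cr (z (i, j)) (z (i + 1, j)) (z (i + 1, j + 1)) (z (i, j + 1)) =
        (((‖z (i, 0) - z (i + 1, 0)‖) ^ 2
          / (‖z (0, j) - z (0, j + 1)‖) ^ 2 : ℝ) : ℂ)) := by
  have hbd : ∀ i j : ℤ, z (i + 1, j) ≠ z (i, j + 1) := by
    intro i j
    have h := hdist i j
    simp only [List.pairwise_cons] at h
    exact h.2.1 _ (by simp)
  have hbc : ∀ i j : ℤ, z (i + 1, j) ≠ z (i + 1, j + 1) := by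
    intro i j
    have h := hdist i j
    simp only [List.pairwise_cons] at h
    exact h.2.1 _ (by simp)
  have had : ∀ i j : ℤ, z (i, j + 1) ≠ z (i, j) := by
    intro i j
    have h := hdist i j
    simp only [List.pairwise_cons] at h
    exact (h.1 _ (by simp)).symm
  have stepI : ∀ i j : ℤ,
      ‖z (i, j + 1) - z (i + 1, j + 1)‖ = ‖z (i, j) - z (i + 1, j)‖ := by
    intro i j
    rw [cabs_sub_comm, hrefl i j, refl_sub_v _ _ _ (hbd i j), abs_k_mul _ _ _ (hbd i j),
      cabs_sub_comm]
  have stepJ : ∀ i j : ℤ,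
      ‖z (i + 1, j) - z (i + 1, j + 1)‖ = ‖z (i, j) - z (i, j + 1)‖ := by
    intro i j
    rw [cabs_sub_comm, hrefl i j, refl_sub_u _ _ _ (hbd i j), abs_k_mul _ _ _ (hbd i j),
      cabs_sub_comm]
  have inv1 : ∀ i j j' : ℤ,
      ‖z (i, j) - z (i + 1, j)‖ = ‖z (i, j') - z (i + 1, j')‖ :=
    fun i => const_of_step (fun j => ‖z (i, j) - z (i + 1, j)‖) (fun j => stepI i j)
  have inv2 : ∀ i i' j : ℤ,
      ‖z (i, j) - z (i, j + 1)‖ = ‖z (i', j) - z (i', j + 1)‖ :=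
    fun i i' j =>
      const_of_step (fun i => ‖z (i, j) - z (i, j + 1)‖) (fun i => stepJ i j) i i'
  refine ⟨inv1, inv2, ?_⟩
  intro i j
  rw [cr_formula (z (i, j)) (z (i + 1, j)) (z (i + 1, j + 1)) (z (i, j + 1))
    (hbd i j) (hbc i j) (had i j) (hrefl i j)]
  rw [inv1 i j 0, cabs_sub_comm (z (i, j + 1)) (z (i, j)), inv2 i 0 j]
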